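/- (Ring Lemma for univalent flowers) Let v be a vertex with exactly k ≥ 3 neighbors in a circle packing whose flower at v is univalent (the k+1 circles have mutually disjoint interiors, circle C_v is surrounded by the chain of k neighbor circles). Then there is a constant R(k) > 0 depending only on k such that r_w / r_v ≥ R(k) for every neighbor w of v. Moreover R(k+1) < R(k) ≤ 1. -/

import Mathlib

open Real

/-- Inner angle at the vertex of radius `a` in the triangle with side lengths
`a+b, a+c, b+c` formed by three mutually externally tangent circles. -/
noncomputable def ang (a b c : ℝ) : ℝ :=
  Real.arccos (((a + b) ^ 2 + (a + c) ^ 2 - (b + c) ^ 2) / (2 * (a + b) * (a + c)))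

namespace RingAux

open InnerProductGeometry EuclideanGeometry

lemma arccos_anti {x y : ℝ} (h : x ≤ y) : arccos y ≤ arccos x := by
  unfold Real.arccos
  have := Real.monotone_arcsin h
  linarith

lemma abs_toReal_coe_le (r : ℝ) : |((r : Real.Angle)).toReal| ≤ |r| := by
  rcases le_or_gt π |r| with h | h
  · exact (Real.Angle.abs_toReal_le_pi _).trans h
  · obtain ⟨h1, h2⟩ := abs_lt.1 h
    rw [Real.Angle.toReal_coe_eq_self_iff.2 ⟨h1, h2.le⟩]

lemma angle_tri {x y z : ℂ} (hx : x ≠ 0) (hy : y ≠ 0) (hz : z ≠ 0) :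
    InnerProductGeometry.angle x z ≤
      InnerProductGeometry.angle x y + InnerProductGeometry.angle y z := by
  haveI := Complex.finrank_real_complex_fact
  set o := Complex.orientation with ho
  rw [o.angle_eq_abs_oangle_toReal hx hz, o.angle_eq_abs_oangle_toReal hx hy,
      o.angle_eq_abs_oangle_toReal hy hz, ← o.oangle_add hx hy hz]
  have : o.oangle x y + o.oangle y z
      = (((o.oangle x y).toReal + (o.oangle y z).toReal : ℝ) : Real.Angle) := by
    rw [Real.Angle.coe_add, Real.Angle.coe_toReal, Real.Angle.coe_toReal]
  rw [this]
  exact (abs_toReal_coe_le _).trans (abs_add_le _ _)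

lemma angle_tri_pts (q x y z : ℂ) (hx : x ≠ q) (hy : y ≠ q) (hz : z ≠ q) :
    ∠ x q z ≤ ∠ x q y + ∠ y q z := by
  simp only [EuclideanGeometry.angle, vsub_eq_sub]
  exact angle_tri (sub_ne_zero.2 hx) (sub_ne_zero.2 hy) (sub_ne_zero.2 hz)

lemma le_arccos_one_sub {x : ℝ} (h0 : 0 ≤ x) (h1 : x ≤ 1) :
    2 * Real.sqrt x ≤ arccos (1 - 2 * x) := by
  have hs0 : 0 ≤ Real.sqrt x := Real.sqrt_nonneg x
  have hs1 : Real.sqrt x ≤ 1 := by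
    rw [show (1:ℝ) = Real.sqrt 1 by simp]
    exact Real.sqrt_le_sqrt h1
  have hpi := Real.pi_gt_three
  have hsq : Real.sqrt x ^ 2 = x := Real.sq_sqrt h0
  have h2 : (2:ℝ) * Real.sqrt x ≤ π := by nlinarith
  have hcos : 1 - 2 * x ≤ Real.cos (2 * Real.sqrt x) := by
    have := Real.one_sub_sq_div_two_le_cos (x := 2 * Real.sqrt x)
    nlinarith
  calc 2 * Real.sqrt x = arccos (Real.cos (2 * Real.sqrt x)) :=
        (Real.arccos_cos (by positivity) h2).symm
    _ ≤ arccos (1 - 2 * x) := arccos_anti hcos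

lemma arccos_one_sub_le {x : ℝ} (h0 : 0 ≤ x) (h1 : x ≤ 1) :
    arccos (1 - 2 * x) ≤ π * Real.sqrt x := by
  have hs0 : 0 ≤ Real.sqrt x := Real.sqrt_nonneg x
  have hs1 : Real.sqrt x ≤ 1 := by
    rw [show (1:ℝ) = Real.sqrt 1 by simp]
    exact Real.sqrt_le_sqrt h1
  have hpi := Real.pi_pos
  have hsq : Real.sqrt x ^ 2 = x := Real.sq_sqrt h0
  have habs : |π * Real.sqrt x| ≤ π := by
    rw [abs_of_nonneg (by positivity)]
    nlinarith
  have hcos : Real.cos (π * Real.sqrt x) ≤ 1 - 2 * x := by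
    have h := Real.cos_le_one_sub_mul_cos_sq habs
    have : 2 / π ^ 2 * (π * Real.sqrt x) ^ 2 = 2 * x := by
      field_simp
      nlinarith [hsq]
    linarith [h, this]
  calc arccos (1 - 2 * x) ≤ arccos (Real.cos (π * Real.sqrt x)) := arccos_anti hcos
    _ = π * Real.sqrt x := Real.arccos_cos (by positivity) (by nlinarith)

noncomputable def thr (k : ℕ) : ℕ → ℝ
  | 0 => ((k : ℝ) ^ 2)⁻¹
  | m + 1 => thr k m ^ 2 / (4 * (k : ℝ) ^ 2)

variable {k : ℕ} (hk : 3 ≤ k)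
include hk

lemma thr_pos (m : ℕ) : 0 < thr k m := by
  have hk0 : (0:ℝ) < (k:ℝ) := by
    have : (3:ℝ) ≤ (k:ℝ) := by exact_mod_cast hk
    linarith
  induction m with
  | zero => simp [thr]; positivity
  | succ m ih => simp only [thr]; positivity

lemma thr_le_one (m : ℕ) : thr k m ≤ 1 := by
  have hk3 : (3:ℝ) ≤ (k:ℝ) := by exact_mod_cast hk
  induction m with
  | zero =>
      simp only [thr]
      rw [inv_le_one_iff₀]
      right; nlinarith
  | succ m ih =>
      simp only [thr]
      have h0 := thr_pos hk m
      rw [div_le_one (by nlinarith)]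
      nlinarith

lemma thr_succ_le (m : ℕ) : thr k (m + 1) ≤ thr k m := by
  have hk3 : (3:ℝ) ≤ (k:ℝ) := by exact_mod_cast hk
  have h0 := thr_pos hk m
  have h1 := thr_le_one hk m
  simp only [thr]
  rw [div_le_iff₀ (by nlinarith)]
  nlinarith [mul_le_mul_of_nonneg_left h1 h0.le,
    mul_le_mul_of_nonneg_left (show (1:ℝ) ≤ 4*(k:ℝ)^2 by nlinarith) h0.le]

lemma thr_ge (m : ℕ) : ((4 * (k:ℝ) ^ 2)⁻¹) ^ (2 ^ (m + 1) - 1) ≤ thr k m := by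
  have hk3 : (3:ℝ) ≤ (k:ℝ) := by exact_mod_cast hk
  have hc0 : (0:ℝ) < (4 * (k:ℝ) ^ 2)⁻¹ := by positivity
  induction m with
  | zero =>
      simp only [thr, pow_one]
      rw [show 2 ^ (0 + 1) - 1 = 1 from by norm_num, pow_one]
      rw [inv_le_inv₀ (by nlinarith) (by positivity)]
      nlinarith
  | succ m ih =>
      have he : (2:ℕ) ^ (m + 1 + 1) - 1 = (2 ^ (m + 1) - 1) + ((2 ^ (m + 1) - 1) + 1) := by
        have : 1 ≤ 2 ^ (m+1) := Nat.one_le_two_pow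
        omega
      have h0 := thr_pos hk m
      have key : ((4 * (k:ℝ)^2)⁻¹) ^ (2 ^ (m+1+1) - 1)
          = (((4 * (k:ℝ)^2)⁻¹) ^ (2 ^ (m+1) - 1)) * (((4 * (k:ℝ)^2)⁻¹) ^ (2 ^ (m+1) - 1))
            * (4 * (k:ℝ)^2)⁻¹ := by
        rw [he, pow_add, pow_add, pow_one]
        ring
      rw [key]
      show _ ≤ thr k m ^ 2 / (4*(k:ℝ)^2)
      rw [div_eq_mul_inv, show thr k m ^ 2 = thr k m * thr k m from pow_two _]
      exact mul_le_mul (mul_le_mul ih ih (by positivity) h0.le) le_rfl (by positivity)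
        (by positivity)

end RingAux

/-- Ring Lemma: there is `R : ℕ → ℝ` with `R(k+1) < R(k) ≤ 1`, `R(k) > 0`, such that for
every univalent flower (a central circle of radius `rv` centered at `z`, surrounded by a
closed tangent chain of `k ≥ 3` circles with centers `c i` and radii `ρ i`, with pairwise
disjoint interiors, wrapping once around so the angles at `z` sum to `2π`), every petal
radius satisfies `ρ i / rv ≥ R k`. -/
theorem stmt_13 :
    ∃ R : ℕ → ℝ,
      (∀ k : ℕ, 3 ≤ k → 0 < R k ∧ R k ≤ 1) ∧
      (∀ k : ℕ, 3 ≤ k → R (k + 1) < R k) ∧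
      (∀ (k : ℕ), 3 ≤ k → ∀ [NeZero k],
        ∀ (z : ℂ) (rv : ℝ) (c : ZMod k → ℂ) (ρ : ZMod k → ℝ),
        0 < rv → (∀ i, 0 < ρ i) →
        (∀ i, dist (c i) z = rv + ρ i) →
        (∀ i : ZMod k, dist (c i) (c (i + 1)) = ρ i + ρ (i + 1)) →
        (∀ i j : ZMod k, i ≠ j → ρ i + ρ j ≤ dist (c i) (c j)) →
        (∑ i : ZMod k, ang rv (ρ i) (ρ (i + 1))) = 2 * Real.pi →
        ∀ i, R k ≤ ρ i / rv) := by
  classical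
  refine ⟨fun k => ((4 * (k:ℝ) ^ 2)⁻¹) ^ (2 ^ k), ?_, ?_, ?_⟩
  · intro k hk
    have hk3 : (3:ℝ) ≤ (k:ℝ) := by exact_mod_cast hk
    constructor
    · have : (0:ℝ) < (k:ℝ) := by linarith
      positivity
    · apply pow_le_one₀ (by positivity)
      rw [inv_le_one_iff₀]; right; nlinarith
  · intro k hk
    have hk3 : (3:ℝ) ≤ (k:ℝ) := by exact_mod_cast hk
    show ((4 * ((k+1:ℕ):ℝ) ^ 2)⁻¹) ^ (2 ^ (k+1)) < ((4 * (k:ℝ) ^ 2)⁻¹) ^ (2 ^ k)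
    push_cast
    have hb0 : (0:ℝ) < (4 * ((k:ℝ)+1) ^ 2)⁻¹ := by positivity
    have hblt : (4 * ((k:ℝ)+1) ^ 2)⁻¹ < (4 * (k:ℝ) ^ 2)⁻¹ := by
      rw [inv_lt_inv₀ (by positivity) (by positivity)]
      nlinarith
    have hle1 : (4 * (k:ℝ)^2)⁻¹ ≤ 1 := by rw [inv_le_one_iff₀]; right; nlinarith
    calc ((4 * ((k:ℝ)+1) ^ 2)⁻¹) ^ (2 ^ (k+1))
        < ((4 * (k:ℝ) ^ 2)⁻¹) ^ (2 ^ (k+1)) :=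
          pow_lt_pow_left₀ hblt hb0.le (by positivity)
      _ ≤ ((4 * (k:ℝ) ^ 2)⁻¹) ^ (2 ^ k) :=
          pow_le_pow_of_le_one (by positivity) hle1
            (Nat.pow_le_pow_right (by norm_num) (by omega))
  · intro k hk _inst z rv c ρ hrv hρ hdz hdt hdisj hsum i0
    by_contra hcon0
    push_neg at hcon0
    have hcon : ρ i0 / rv < ((4 * (k:ℝ) ^ 2)⁻¹) ^ (2 ^ k) := hcon0
    clear hcon0
    have hk3 : (3:ℝ) ≤ (k:ℝ) := by exact_mod_cast hk
    have hk0 : (0:ℝ) < (k:ℝ) := by linarith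
    have hπ := Real.pi_pos
    set u : ZMod k → ℝ := fun i => ρ i / (rv + ρ i) with hu
    have hrρ : ∀ i, 0 < rv + ρ i := fun i => by have := hρ i; linarith
    have hu0 : ∀ i, 0 < u i := fun i => div_pos (hρ i) (hrρ i)
    have hu1 : ∀ i, u i < 1 := fun i => by
      simp only [hu]; exact (div_lt_one (hrρ i)).2 (by linarith [hρ i])
    have hcz : ∀ i, c i ≠ z := by
      intro i h
      have h2 : dist (c i) z = 0 := by simp [h]
      rw [hdz i] at h2; nlinarith [hρ i]
    have hcos : ∀ i j : ZMod k, Real.cos (EuclideanGeometry.angle (c i) z (c j))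
        = ((rv + ρ i) ^ 2 + (rv + ρ j) ^ 2 - dist (c i) (c j) ^ 2)
          / (2 * (rv + ρ i) * (rv + ρ j)) := by
      intro i j
      have hlaw := EuclideanGeometry.law_cos (c i) z (c j)
      rw [hdz i, hdz j] at hlaw
      have h1 := (hrρ i).ne'
      have h2 := (hrρ j).ne'
      field_simp
      linear_combination hlaw
    have huu : ∀ i j : ZMod k,
        ((rv + ρ i) ^ 2 + (rv + ρ j) ^ 2 - (ρ i + ρ j) ^ 2)
          / (2 * (rv + ρ i) * (rv + ρ j)) = 1 - 2 * (u i * u j) := by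
      intro i j
      have h1 := (hrρ i).ne'
      have h2 := (hrρ j).ne'
      simp only [hu]
      field_simp
      ring
    have hangle_eq : ∀ i j : ZMod k, dist (c i) (c j) = ρ i + ρ j →
        EuclideanGeometry.angle (c i) z (c j) = Real.arccos (1 - 2 * (u i * u j)) := by
      intro i j hd
      have h : Real.cos (EuclideanGeometry.angle (c i) z (c j)) = 1 - 2 * (u i * u j) := by
        rw [hcos i j, hd, huu i j]
      rw [← h, Real.arccos_cos (EuclideanGeometry.angle_nonneg _ _ _)
        (EuclideanGeometry.angle_le_pi _ _ _)]
    have hang_arccos : ∀ i j : ZMod k, ang rv (ρ i) (ρ j)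
        = Real.arccos (1 - 2 * (u i * u j)) := by
      intro i j
      unfold ang
      rw [huu i j]
    have hprodle1 : ∀ i j : ZMod k, u i * u j ≤ 1 := by
      intro i j
      have := mul_le_mul (hu1 i).le (hu1 j).le (hu0 j).le zero_le_one
      simpa using this
    have hlow : ∀ i j : ZMod k, i ≠ j →
        2 * Real.sqrt (u i * u j) ≤ EuclideanGeometry.angle (c i) z (c j) := by
      intro i j hij
      have hd := hdisj i j hij
      have hD : (0:ℝ) < 2 * (rv + ρ i) * (rv + ρ j) := by
        have h1 := hrρ i; have h2 := hrρ j; positivity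
      have hc1 : Real.cos (EuclideanGeometry.angle (c i) z (c j)) ≤ 1 - 2 * (u i * u j) := by
        rw [hcos i j, ← huu i j, div_le_div_iff₀ hD hD]
        have hs : (ρ i + ρ j) ^ 2 ≤ dist (c i) (c j) ^ 2 :=
          pow_le_pow_left₀ (by linarith [hρ i, hρ j]) hd 2
        exact mul_le_mul_of_nonneg_right (by linarith) hD.le
      calc 2 * Real.sqrt (u i * u j)
          ≤ Real.arccos (1 - 2 * (u i * u j)) :=
            RingAux.le_arccos_one_sub (mul_pos (hu0 i) (hu0 j)).le (hprodle1 i j)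
        _ ≤ Real.arccos (Real.cos (EuclideanGeometry.angle (c i) z (c j))) :=
            RingAux.arccos_anti hc1
        _ = EuclideanGeometry.angle (c i) z (c j) :=
            Real.arccos_cos (EuclideanGeometry.angle_nonneg _ _ _)
              (EuclideanGeometry.angle_le_pi _ _ _)
    have hupp : ∀ i j : ZMod k,
        Real.arccos (1 - 2 * (u i * u j)) ≤ π * Real.sqrt (u i) := by
      intro i j
      have h1 : Real.arccos (1 - 2 * (u i * u j)) ≤ Real.arccos (1 - 2 * u i) := by
        apply RingAux.arccos_anti
        nlinarith [mul_le_mul_of_nonneg_left (hu1 j).le (hu0 i).le]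
      exact h1.trans (RingAux.arccos_one_sub_le (hu0 i).le (hu1 i).le)
    have hupp' : ∀ i j : ZMod k,
        Real.arccos (1 - 2 * (u i * u j)) ≤ π * Real.sqrt (u j) := by
      intro i j
      rw [show u i * u j = u j * u i from mul_comm _ _]
      exact hupp j i
    have chain : ∀ (a : ZMod k) (n : ℕ),
        EuclideanGeometry.angle (c a) z (c (a + (n : ZMod k))) ≤
          ∑ t ∈ Finset.range n,
            Real.arccos (1 - 2 * (u (a + (t : ZMod k)) * u (a + (t : ZMod k) + 1))) := by
      intro a n
      induction n with
      | zero =>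
          simp only [Nat.cast_zero, add_zero, Finset.range_zero, Finset.sum_empty]
          rw [EuclideanGeometry.angle_self_of_ne (hcz a)]
      | succ n ih =>
          have hcast : ((n+1:ℕ) : ZMod k) = ((n:ℕ) : ZMod k) + 1 := by push_cast; ring
          rw [Finset.sum_range_succ, hcast, ← add_assoc]
          have tri := RingAux.angle_tri_pts z (c a) (c (a + ((n:ℕ) : ZMod k)))
            (c (a + ((n:ℕ) : ZMod k) + 1)) (hcz _) (hcz _) (hcz _)
          have hstep : EuclideanGeometry.angle (c (a + ((n:ℕ):ZMod k))) z
                (c (a + ((n:ℕ):ZMod k) + 1))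
              = Real.arccos (1 - 2 * (u (a + ((n:ℕ):ZMod k)) * u (a + ((n:ℕ):ZMod k) + 1))) :=
            hangle_eq _ _ (hdt _)
          calc EuclideanGeometry.angle (c a) z (c (a + ((n:ℕ):ZMod k) + 1)) ≤ _ := tri
            _ ≤ _ := by rw [hstep]; exact add_le_add ih le_rfl
    have hRthr : ((4 * (k:ℝ)^2)⁻¹) ^ (2 ^ k) ≤ RingAux.thr k (k - 2) := by
      refine le_trans ?_ (RingAux.thr_ge hk (k-2))
      apply pow_le_pow_of_le_one (by positivity)
        (by rw [inv_le_one_iff₀]; right; nlinarith)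
      have h2 : (2:ℕ) ^ ((k-2)+1) ≤ 2 ^ k := Nat.pow_le_pow_right (by norm_num) (by omega)
      exact le_trans (Nat.sub_le _ _) h2
    have hstart : u i0 < RingAux.thr k (k - 2) := by
      have h1 : u i0 ≤ ρ i0 / rv := by
        simp only [hu]
        apply div_le_div_of_nonneg_left (hρ i0).le hrv
        linarith [hρ i0]
      exact lt_of_le_of_lt h1 (lt_of_lt_of_le hcon hRthr)
    have main : ∀ j : ℕ, j ≤ k - 2 → ∃ i₁ : ZMod k, ∀ t : ℕ, t ≤ j →
        u (i₁ + (t : ZMod k)) ≤ RingAux.thr k (k - 2 - j) := by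
      intro j
      induction j with
      | zero =>
          intro _
          refine ⟨i0, fun t ht => ?_⟩
          have ht0 : t = 0 := by omega
          subst ht0
          simpa using hstart.le
      | succ j ih =>
          intro hj
          obtain ⟨i₁, hblock⟩ := ih (by omega)
          have hmj : k - 2 - j = (k - 2 - (j+1)) + 1 := by omega
          set m := k - 2 - (j + 1) with hm
          rw [hmj] at hblock
          have hT0 := RingAux.thr_pos hk m
          set L : ZMod k := i₁ - 1 with hL
          set Rr : ZMod k := i₁ + ((j + 1 : ℕ) : ZMod k) with hR
          have hLR : L ≠ Rr := by
            intro h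
            rw [hL, hR] at h
            have h0 : ((j + 2 : ℕ) : ZMod k) = 0 := by
              push_cast at h ⊢
              linear_combination -h
            have hdvd := (ZMod.natCast_eq_zero_iff _ _).1 h0
            have := Nat.le_of_dvd (by omega) hdvd
            omega
          have hLn : L + ((j + 2 : ℕ) : ZMod k) = Rr := by
            rw [hL, hR]
            push_cast
            ring
          have hch := chain L (j + 2)
          rw [hLn] at hch
          have hidx : ∀ t : ℕ, 0 < t → L + (t : ZMod k) = i₁ + ((t - 1 : ℕ) : ZMod k) := by
            intro t htpos
            rw [hL]
            have h2 : ((t - 1 : ℕ) : ZMod k) = (t : ZMod k) - 1 := by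
              have h3 := Nat.cast_sub (R := ZMod k) (show 1 ≤ t from htpos)
              simpa using h3
            rw [h2]
            ring
          have hterm : ∀ t ∈ Finset.range (j + 2),
              Real.arccos (1 - 2 * (u (L + (t : ZMod k)) * u (L + (t : ZMod k) + 1)))
                ≤ π * Real.sqrt (RingAux.thr k (m + 1)) := by
            intro t ht
            rw [Finset.mem_range] at ht
            rcases Nat.eq_zero_or_pos t with rfl | htpos
            · have h1 : L + ((0:ℕ) : ZMod k) + 1 = i₁ + ((0:ℕ) : ZMod k) := by
                rw [hL]; push_cast; ring
              refine le_trans (hupp' _ _) ?_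
              rw [h1]
              exact mul_le_mul_of_nonneg_left
                (Real.sqrt_le_sqrt (hblock 0 (by omega))) hπ.le
            · refine le_trans (hupp _ _) ?_
              rw [hidx t htpos]
              exact mul_le_mul_of_nonneg_left
                (Real.sqrt_le_sqrt (hblock (t-1) (by omega))) hπ.le
          have hsum2 := Finset.sum_le_card_nsmul (Finset.range (j+2)) _ _ hterm
          rw [Finset.card_range, nsmul_eq_mul] at hsum2
          have hsqthr : Real.sqrt (RingAux.thr k (m+1)) = RingAux.thr k m / (2*(k:ℝ)) := by
            have hdef : RingAux.thr k (m+1) = RingAux.thr k m ^ 2 / (4*(k:ℝ)^2) := by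
              simp only [RingAux.thr]
            rw [hdef, show RingAux.thr k m ^ 2 / (4*(k:ℝ)^2)
                = (RingAux.thr k m / (2*(k:ℝ)))^2 from by ring]
            exact Real.sqrt_sq (by positivity)
          have hminsq : min (u L) (u Rr) ≤ Real.sqrt (u L * u Rr) := by
            have h2 : min (u L) (u Rr) ^ 2 ≤ u L * u Rr := by
              rcases le_total (u L) (u Rr) with h | h
              · rw [min_eq_left h]; nlinarith [hu0 L, hu0 Rr]
              · rw [min_eq_right h]; nlinarith [hu0 L, hu0 Rr]
            calc min (u L) (u Rr) = Real.sqrt (min (u L) (u Rr) ^ 2) :=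
                  (Real.sqrt_sq (le_min (hu0 L).le (hu0 Rr).le)).symm
              _ ≤ _ := Real.sqrt_le_sqrt h2
          have hjk : ((j:ℝ) + 2) ≤ (k:ℝ) := by
            have h : (j + 2 : ℕ) ≤ k := by omega
            exact_mod_cast h
          have hb2 : (2:ℝ) * min (u L) (u Rr)
              ≤ ((j:ℝ)+2) * (π * Real.sqrt (RingAux.thr k (m+1))) := by
            have e2 : EuclideanGeometry.angle (c L) z (c Rr)
                ≤ ((j+2 : ℕ):ℝ) * (π * Real.sqrt (RingAux.thr k (m+1))) :=
              le_trans hch hsum2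
            have e3 : ((j+2:ℕ):ℝ) = (j:ℝ)+2 := by push_cast; ring
            rw [e3] at e2
            have e1 := hlow L Rr hLR
            linarith
          rw [hsqthr] at hb2
          have hmin : min (u L) (u Rr) ≤ RingAux.thr k m := by
            have h2 : ((j:ℝ)+2) * (π * (RingAux.thr k m / (2*(k:ℝ))))
                ≤ (k:ℝ) * (4 * (RingAux.thr k m / (2*(k:ℝ)))) :=
              mul_le_mul hjk
                (mul_le_mul Real.pi_le_four le_rfl (by positivity) (by norm_num))
                (by positivity) hk0.le
            have h3 : (k:ℝ) * (4 * (RingAux.thr k m / (2*(k:ℝ)))) = 2 * RingAux.thr k m := by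
              field_simp
              ring
            linarith
          rcases le_total (u L) (u Rr) with hcse | hcse
          · refine ⟨L, fun t ht => ?_⟩
            rcases Nat.eq_zero_or_pos t with rfl | htpos
            · have hL2 : u L ≤ RingAux.thr k m := by
                rw [min_eq_left hcse] at hmin; exact hmin
              simpa using hL2
            · rw [hidx t htpos]
              exact le_trans (hblock (t-1) (by omega)) (RingAux.thr_succ_le hk m)
          · refine ⟨i₁, fun t ht => ?_⟩
            rcases Nat.lt_or_ge t (j+1) with hlt | hge
            · exact le_trans (hblock t (by omega)) (RingAux.thr_succ_le hk m)
            · have ht1 : t = j + 1 := by omega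
              subst ht1
              rw [← hR]
              rw [min_eq_right hcse] at hmin
              exact hmin
    obtain ⟨i₁, hblock⟩ := main (k-2) le_rfl
    have hthr0 : RingAux.thr k (k - 2 - (k-2)) = ((k:ℝ)^2)⁻¹ := by
      rw [Nat.sub_self]
      simp only [RingAux.thr]
    have hsqrt0 : Real.sqrt (((k:ℝ)^2)⁻¹) = 1/(k:ℝ) := by
      rw [Real.sqrt_inv, Real.sqrt_sq hk0.le, one_div]
    have hcover : ∀ i : ZMod k, ang rv (ρ i) (ρ (i+1)) ≤ π * (1/(k:ℝ)) := by
      intro i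
      rw [hang_arccos]
      have htk : (i - i₁).val < k := ZMod.val_lt _
      have hi : i = i₁ + (((i - i₁).val : ℕ) : ZMod k) := by
        rw [ZMod.natCast_val, ZMod.cast_id]
        ring
      rcases Nat.lt_or_ge ((i - i₁).val) (k-1) with hlt | hge
      · have hb := hblock ((i - i₁).val) (by omega)
        rw [← hi, hthr0] at hb
        calc Real.arccos (1 - 2 * (u i * u (i+1))) ≤ π * Real.sqrt (u i) := hupp i (i+1)
          _ ≤ π * (1/(k:ℝ)) := by
              rw [← hsqrt0]
              exact mul_le_mul_of_nonneg_left (Real.sqrt_le_sqrt hb) hπ.le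
      · have ht1 : (i - i₁).val = k - 1 := by omega
        have hc1 : ((k - 1 : ℕ) : ZMod k) + 1 = ((k:ℕ) : ZMod k) := by
          have h3 := Nat.cast_sub (R := ZMod k) (show 1 ≤ k by omega)
          rw [h3]
          simp
        have hi1 : i + 1 = i₁ + ((0:ℕ) : ZMod k) := by
          rw [hi, ht1, add_assoc, hc1, ZMod.natCast_self, add_zero, Nat.cast_zero, add_zero]
        have hb := hblock 0 (by omega)
        rw [← hi1, hthr0] at hb
        calc Real.arccos (1 - 2 * (u i * u (i+1))) ≤ π * Real.sqrt (u (i+1)) := hupp' i (i+1)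
          _ ≤ π * (1/(k:ℝ)) := by
              rw [← hsqrt0]
              exact mul_le_mul_of_nonneg_left (Real.sqrt_le_sqrt hb) hπ.le
    have hfin := Finset.sum_le_card_nsmul Finset.univ
      (fun i : ZMod k => ang rv (ρ i) (ρ (i+1))) (π * (1/(k:ℝ))) (fun i _ => hcover i)
    rw [hsum, Finset.card_univ, ZMod.card, nsmul_eq_mul] at hfin
    have heq : (k:ℝ) * (π * (1/(k:ℝ))) = π := by field_simp
    rw [heq] at hfin
    linarith
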